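/- Let the hypersurface data (h, l, l2) with inverse data (P, n, n2) be given at a NON-NULL point, i.e. n2 ≠ 0. Suppose two rigging transformations with gauge data (λ±, W±, Z±), λ± ≠ 0, n2·W± + Z±(n) = 0, act on the same data, producing l'± = λ±(l + Z±) and l2'± = (λ±)²(l2 + 2W± + P(Z±,Z±) − n2·(W±)²). If l'⁺ = l'⁻, l2'⁺ = l2'⁻, and additionally λ⁺ and λ⁻ have the same sign (orientation compatibility), then λ⁺ = λ⁻, W⁺ = W⁻ and Z⁺ = Z⁻. -/
import Mathlib


/-- Uniqueness of rigging gauge fields at a NON-NULL point (n2 ≠ 0), given orientation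
compatibility (λ⁺ and λ⁻ of the same sign): compatibility of the transformed rigging
data forces the gauge fields to agree. -/
theorem stmt_9
    (V : Type*) [AddCommGroup V] [Module ℝ V] [FiniteDimensional ℝ V]
    (h : V →ₗ[ℝ] V →ₗ[ℝ] ℝ) (hsymm : ∀ X Y : V, h X Y = h Y X)
    (l : Module.Dual ℝ V) (l2 : ℝ)
    (P : Module.Dual ℝ V →ₗ[ℝ] Module.Dual ℝ V →ₗ[ℝ] ℝ)
    (Psymm : ∀ ω χ : Module.Dual ℝ V, P ω χ = P χ ω)
    (n : V) (n2 : ℝ)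
    (c1 : ∀ (ω : Module.Dual ℝ V) (X : V), P ω (h X) + ω n * l X = ω X)
    (c2 : ∀ ω : Module.Dual ℝ V, P ω l + l2 * ω n = 0)
    (c3 : l n + n2 * l2 = 1)
    (c4 : ∀ X : V, h n X + n2 * l X = 0)
    (hnn : n2 ≠ 0)
    (lamp lamm : ℝ) (hlp : lamp ≠ 0) (hlm : lamm ≠ 0)
    (Wp Wm : ℝ) (Zp Zm : Module.Dual ℝ V)
    (hcp : n2 * Wp + Zp n = 0) (hcm : n2 * Wm + Zm n = 0)
    (hl' : lamp • (l + Zp) = lamm • (l + Zm))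
    (hl2' : lamp ^ 2 * (l2 + 2 * Wp + P Zp Zp - n2 * Wp ^ 2)
      = lamm ^ 2 * (l2 + 2 * Wm + P Zm Zm - n2 * Wm ^ 2))
    (horient : 0 < lamp * lamm) :
    lamp = lamm ∧ Wp = Wm ∧ Zp = Zm := by
  have h1 : lamp * (l n + Zp n) = lamm * (l n + Zm n) := by
    have := congrArg (fun f : Module.Dual ℝ V => f n) hl'
    simpa [mul_add] using this
  have h3 : lamp * (lamp * ((P l) l + (P Zp) l + ((P l) Zp + (P Zp) Zp)))
      = lamm * (lamm * ((P l) l + (P Zm) l + ((P l) Zm + (P Zm) Zm))) := by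
    have := congrArg (fun f : Module.Dual ℝ V => P f f) hl'
    simp only [map_add, map_smul, LinearMap.add_apply, LinearMap.smul_apply,
      smul_eq_mul] at this
    ring_nf at this ⊢
    linarith [this]
  have cll := c2 l
  have czp := c2 Zp
  have czm := c2 Zm
  have spz := Psymm l Zp
  have smz := Psymm l Zm
  have e1 : lamp * (1 - n2*l2 - n2*Wp) = lamm * (1 - n2*l2 - n2*Wm) := by
    linear_combination h1 - lamp * c3 - lamp * hcp + lamm * c3 + lamm * hcm
  have e3 : lamp^2 * (l2*(n2*l2-1) + 2*l2*n2*Wp + P Zp Zp)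
      = lamm^2 * (l2*(n2*l2-1) + 2*l2*n2*Wm + P Zm Zm) := by
    linear_combination h3 - lamp^2*cll - 2*lamp^2*czp - lamp^2*spz
      + lamp^2*l2*c3 + 2*lamp^2*l2*hcp + lamm^2*cll + 2*lamm^2*czm
      + lamm^2*smz - lamm^2*l2*c3 - 2*lamm^2*l2*hcm
  have hsq : lamp ^ 2 = lamm ^ 2 := by
    linear_combination (lamp*(1-n2*l2-n2*Wp)+lamm*(1-n2*l2-n2*Wm))*e1
      + n2*hl2' - n2*e3
  have hmul : (lamp - lamm) * (lamp + lamm) = 0 := by linear_combination hsq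
  have hlam : lamp = lamm := by
    rcases mul_eq_zero.1 hmul with hc | hc
    · linarith
    · exfalso; nlinarith [sq_nonneg lamp]
  subst hlam
  have hW : Wp = Wm := by
    have h2 : lamp * (n2 * Wp) = lamp * (n2 * Wm) := by linear_combination -e1
    have := mul_left_cancel₀ hlp h2
    exact mul_left_cancel₀ hnn this
  refine ⟨rfl, hW, ?_⟩
  have hZ : lamp • Zp = lamp • Zm := by
    have h2 : lamp • l + lamp • Zp = lamp • l + lamp • Zm := by
      simpa [smul_add] using hl'
    exact add_left_cancel h2
  exact smul_right_injective (Module.Dual ℝ V) hlp hZ
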